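/- arXiv:1003.4222 — 3 statements merged into one kernel-verified Lean document; each statement's English description precedes it below -/
import Mathlib

section
/- Let ν ≥ 1 and k ≥ 0 be integers, let a > b > 0 be real, set c = (a² − b²)/(2b), and for integers j ≥ 0 and μ ≥ 0 put h_j^μ = (π (j+μ)! / (a · j!)) · (a/b)^{2j} · (2a/(a² − b²))^{μ+1}. Then (2ν/a) ∑_{n=0}^{k} h_n^ν + (ν²/c²) ∑_{n=0}^{k} h_n^{ν−1} = ((k+1)ν/c²) · h_{k+1}^{ν−1}. -/
open Real

/-- The squared norm `h_j^μ = (π (j+μ)! / (a j!)) (a/b)^{2j} (2a/(a²−b²))^{μ+1}`. -/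
noncomputable def hnorm (a b : ℝ) (j μ : ℕ) : ℝ :=
  π * (Nat.factorial (j + μ)) / (a * Nat.factorial j) * (a / b) ^ (2 * j) *
    (2 * a / (a ^ 2 - b ^ 2)) ^ (μ + 1)

lemma hnorm_succ_mu (a b : ℝ) (m w : ℕ) :
    hnorm a b m (w + 1) =
      ((m : ℝ) + w + 1) * (2 * a / (a ^ 2 - b ^ 2)) * hnorm a b m w := by
  have h1 : m + (w + 1) = (m + w) + 1 := by ring
  simp only [hnorm, h1, Nat.factorial_succ, pow_succ]
  push_cast
  ring

lemma hnorm_succ_j (a b : ℝ) (ha : a ≠ 0) (m w : ℕ) :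
    ((m : ℝ) + 1) * hnorm a b (m + 1) w =
      ((m : ℝ) + w + 1) * (a / b) ^ 2 * hnorm a b m w := by
  have hF : (Nat.factorial m : ℝ) ≠ 0 := Nat.cast_ne_zero.mpr (Nat.factorial_ne_zero _)
  have hm1 : ((m : ℝ) + 1) ≠ 0 := by positivity
  have h2 : (m + 1) + w = (m + w) + 1 := by ring
  have h3 : 2 * (m + 1) = 2 * m + 2 := by ring
  have key : ((m : ℝ) + 1) * (π * ((((m : ℝ) + w + 1)) * (Nat.factorial (m + w) : ℝ)) /
      (a * ((((m : ℝ) + 1)) * (Nat.factorial m : ℝ)))) =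
      ((m : ℝ) + w + 1) * (π * (Nat.factorial (m + w) : ℝ) / (a * (Nat.factorial m : ℝ))) := by
    field_simp
  simp only [hnorm, h2, h3, Nat.factorial_succ, pow_add]
  push_cast
  linear_combination ((a / b) ^ (2 * m) * (a / b) ^ 2 * (2 * a / (a ^ 2 - b ^ 2)) ^ (w + 1)) * key
lemma hnorm_key (w m : ℕ) (a b : ℝ) (hb : 0 < b) (hab : b < a) :
    ((m : ℝ) * ((w : ℝ) + 1) / ((a ^ 2 - b ^ 2) / (2 * b)) ^ 2) * hnorm a b m w +
      (2 * ((w : ℝ) + 1) / a) * hnorm a b m (w + 1) +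
      (((w : ℝ) + 1) ^ 2 / ((a ^ 2 - b ^ 2) / (2 * b)) ^ 2) * hnorm a b m w =
    (((m : ℝ) + 1) * ((w : ℝ) + 1) / ((a ^ 2 - b ^ 2) / (2 * b)) ^ 2) * hnorm a b (m + 1) w := by
  have ha : (0:ℝ) < a := hb.trans hab
  have hd : a ^ 2 - b ^ 2 ≠ 0 := by nlinarith
  have hm1 : ((m : ℝ) + 1) ≠ 0 := by positivity
  have hrel2 := hnorm_succ_j a b (ne_of_gt ha) m w
  have h2 : hnorm a b (m + 1) w = ((m : ℝ) + w + 1) * (a / b) ^ 2 * hnorm a b m w / ((m : ℝ) + 1) := by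
    rw [eq_div_iff hm1]
    linear_combination hrel2
  rw [hnorm_succ_mu a b m w, h2]
  field_simp
  ring

theorem hnorm_telescoping_identity (ν k : ℕ) (hν : 1 ≤ ν) (a b : ℝ) (hb : 0 < b) (hab : b < a) :
    (2 * ν / a) * ∑ n ∈ Finset.range (k + 1), hnorm a b n ν +
      ((ν : ℝ) ^ 2 / ((a ^ 2 - b ^ 2) / (2 * b)) ^ 2) * ∑ n ∈ Finset.range (k + 1), hnorm a b n (ν - 1) =
    (((k : ℝ) + 1) * ν / ((a ^ 2 - b ^ 2) / (2 * b)) ^ 2) * hnorm a b (k + 1) (ν - 1) := by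
  obtain ⟨w, rfl⟩ : ∃ w, ν = w + 1 := ⟨ν - 1, (Nat.succ_pred_eq_of_pos hν).symm⟩
  simp only [Nat.add_sub_cancel]
  induction k with
  | zero =>
      simp only [Finset.sum_range_succ, Finset.sum_range_zero, zero_add, Nat.cast_zero]
      have key := hnorm_key w 0 a b hb hab
      push_cast at key ⊢
      linear_combination key
  | succ k ih =>
      simp only [Finset.sum_range_succ] at ih ⊢
      have key := hnorm_key w (k + 1) a b hb hab
      push_cast at key ih ⊢
      linear_combination ih + key
end

section
/- For all integers k ≥ 0 and α ≥ 0, every nonzero complex number z, and every radius 0 < r < 1, one has k! L_k^α(z) / (k+α)! = (1/(2πi (−z)^α)) ∮_{|u|=r} (1−u)^{α−1} u^{−(k+1+α)} e^{−z u/(1−u)} du, where (−z)^α is the α-th integer power of −z. -/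
open MeasureTheory Complex Real Filter

/-- Generalized Laguerre polynomial `L_k^α(z)` as a function of a complex variable. -/
noncomputable def Lag (k α : ℕ) (z : ℂ) : ℂ :=
  ∑ m ∈ Finset.range (k + 1),
    ((-1 : ℂ) ^ m / (Nat.factorial m)) * (Nat.choose (k + α) (k - m)) * z ^ m

open Metric


section helpers
variable {r : ℝ}

lemma sph_norm {u : ℂ} (hu : u ∈ sphere (0:ℂ) r) : ‖u‖ = r := by
  simpa [mem_sphere_zero_iff_norm] using hu

lemma sph_ne (hr0 : 0 < r) {u : ℂ} (hu : u ∈ sphere (0:ℂ) r) : u ≠ 0 := by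
  intro h; rw [h] at hu; simp [mem_sphere_zero_iff_norm] at hu; linarith [hu ▸ hr0]

lemma sph_one_sub_norm (hr1 : r < 1) {u : ℂ} (hu : u ∈ sphere (0:ℂ) r) :
    1 - r ≤ ‖1 - u‖ := by
  have := norm_sub_norm_le (1:ℂ) u
  simpa [sph_norm hu] using this

lemma sph_one_sub_ne (hr1 : r < 1) {u : ℂ} (hu : u ∈ sphere (0:ℂ) r) : (1:ℂ) - u ≠ 0 := by
  intro h
  have h2 := sph_one_sub_norm hr1 hu
  rw [h] at h2; simp at h2; linarith

lemma cball_one_sub_ne (hr1 : r < 1) {u : ℂ} (hu : u ∈ closedBall (0:ℂ) r) : (1:ℂ) - u ≠ 0 := by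
  intro h
  have : u = 1 := by linear_combination -h
  rw [this] at hu
  simp [mem_closedBall, dist_eq_norm] at hu
  linarith

lemma contOn (hr0 : 0 < r) (hr1 : r < 1) (n m : ℤ) :
    ContinuousOn (fun u : ℂ => u ^ n * (1 - u) ^ m) (sphere (0:ℂ) r) := by
  intro u hu
  apply ContinuousAt.continuousWithinAt
  exact ((continuousAt_zpow₀ _ _ (Or.inl (sph_ne hr0 hu))).mul
    ((continuousAt_zpow₀ _ _ (Or.inl (sph_one_sub_ne hr1 hu))).comp
      ((continuous_const.sub continuous_id).continuousAt)))

lemma integr (hr0 : 0 < r) (hr1 : r < 1) (n m : ℤ) :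
    CircleIntegrable (fun u : ℂ => u ^ n * (1 - u) ^ m) 0 r :=
  (contOn hr0 hr1 n m).circleIntegrable hr0.le

lemma mono_int (hr0 : 0 < r) (n : ℤ) :
    (∮ u in C(0, r), u ^ n) = if n = -1 then 2 * π * I else 0 := by
  split_ifs with h
  · subst h
    have h0 : (0:ℂ) ∈ ball (0:ℂ) r := by simpa using hr0
    have := circleIntegral.integral_sub_inv_of_mem_ball h0
    simpa using this
  · have := circleIntegral.integral_sub_zpow_of_ne h (0:ℂ) 0 r
    simpa using this

lemma int_zero (hr0 : 0 < r) (hr1 : r < 1) (n : ℕ) (m : ℤ) :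
    (∮ u in C(0, r), u ^ (n:ℤ) * (1 - u) ^ m) = 0 := by
  have hd : ∀ w ∈ closedBall (0:ℂ) r, DifferentiableAt ℂ (fun u : ℂ => u ^ (n:ℤ) * (1 - u) ^ m) w := by
    intro w hw
    have h1 : DifferentiableAt ℂ (fun u : ℂ => u ^ (n:ℤ)) w := by
      simp only [zpow_natCast]; exact differentiableAt_pow n
    exact h1.mul (((differentiableAt_const (1:ℂ)).sub differentiableAt_id).zpow
      (Or.inl (cball_one_sub_ne hr1 hw)))
  refine Complex.circleIntegral_eq_zero_of_differentiable_on_off_countable hr0.le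
    Set.countable_empty (fun w hw => (hd w hw).continuousAt.continuousWithinAt) ?_
  intro w hw
  exact hd w (ball_subset_closedBall hw.1)



end helpers
section helpers
variable {r : ℝ}

lemma split (hr0 : 0 < r) (hr1 : r < 1) (n : ℤ) (b : ℤ) :
    (∮ u in C(0, r), u ^ n * (1 - u) ^ (b - 1)) =
      (∮ u in C(0, r), u ^ n * (1 - u) ^ b) +
        ∮ u in C(0, r), u ^ (n + 1) * (1 - u) ^ (b - 1) := by
  have hsub := circleIntegral.integral_sub (integr hr0 hr1 n (b-1)) (integr hr0 hr1 n b)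
  have hcong : (∮ u in C(0, r), (u ^ n * (1 - u) ^ (b-1) - u ^ n * (1 - u) ^ b)) =
      ∮ u in C(0, r), u ^ (n + 1) * (1 - u) ^ (b - 1) := by
    refine circleIntegral.integral_congr hr0.le fun u hu => ?_
    have h0 := sph_ne hr0 hu
    have h1 := sph_one_sub_ne hr1 hu
    have e1 : (1 - u) ^ b = (1 - u) ^ (b - 1) * (1 - u) := by
      rw [← zpow_add_one₀ h1]; ring_nf
    have e2 : u ^ (n + 1) = u ^ n * u := by rw [← zpow_add_one₀ h0]
    rw [e1, e2]; ring
  rw [hcong] at hsub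
  linear_combination -hsub

lemma L2 (hr0 : 0 < r) (hr1 : r < 1) :
    ∀ b a : ℕ, (∮ u in C(0, r), u ^ (-(a:ℤ) - 1) * (1 - u) ^ (-(b:ℤ))) =
      2 * π * I * ((a + b - 1).choose a) := by
  intro b
  induction b with
  | zero =>
      intro a
      have h : (∮ u in C(0, r), u ^ (-(a:ℤ) - 1) * (1 - u) ^ (-((0:ℕ)):ℤ))
          = ∮ u in C(0, r), u ^ (-(a:ℤ) - 1) := by
        refine circleIntegral.integral_congr hr0.le fun u hu => ?_
        simp
      rw [h, mono_int hr0]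
      rcases Nat.eq_zero_or_pos a with ha | ha
      · subst ha; norm_num
      · have hne : (-(a:ℤ) - 1) ≠ -1 := by omega
        rw [if_neg hne, Nat.choose_eq_zero_of_lt (by omega)]
        norm_num
  | succ b ih =>
      intro a
      induction a with
      | zero =>
          have hs := split hr0 hr1 (-((0:ℕ):ℤ) - 1) (-(b:ℤ))
          have he : (-(b:ℤ)) - 1 = -(((b+1 : ℕ)) : ℤ) := by push_cast; ring
          have he2 : (-((0:ℕ):ℤ) - 1 + 1) = ((0:ℕ):ℤ) := by simp
          rw [he, he2] at hs
          have h2 : (∮ u in C(0, r), u ^ ((0:ℕ):ℤ) * (1 - u) ^ (-((b+1:ℕ)):ℤ)) = 0 :=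
            int_zero hr0 hr1 0 _
          rw [hs, ih 0, h2]
          simp
      | succ a iha =>
          have hs := split hr0 hr1 (-((a+1:ℕ):ℤ) - 1) (-(b:ℤ))
          have he : (-(b:ℤ)) - 1 = -((b+1 : ℕ) : ℤ) := by push_cast; ring
          have he2 : (-((a+1:ℕ):ℤ) - 1 + 1) = -((a:ℕ):ℤ) - 1 := by push_cast; ring
          rw [he, he2] at hs
          rw [hs, ih (a+1), iha]
          have harith : ((a:ℕ)+1 + (b+1) - 1).choose (a+1) =
              (a + (b+1) - 1).choose a + ((a+1) + b - 1).choose (a+1) := by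
            have h1 : (a:ℕ)+1 + (b+1) - 1 = (a + b) + 1 := by omega
            have h2 : (a+1) + b - 1 = a + b := by omega
            have h3 : a + (b+1) - 1 = a + b := by omega
            rw [h1, h2, h3, Nat.choose_succ_succ']
          rw [harith]
          push_cast
          ring
end helpers



section helpers
variable {r : ℝ}

lemma L4 (hr0 : 0 < r) (hr1 : r < 1) :
    ∀ (t : ℕ) (n : ℤ), n + t < -1 → (∮ u in C(0, r), u ^ n * (1 - u) ^ (t:ℤ)) = 0 := by
  intro t
  induction t with
  | zero =>
      intro n hn
      have h : (∮ u in C(0, r), u ^ n * (1 - u) ^ ((0:ℕ):ℤ)) = ∮ u in C(0, r), u ^ n := by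
        refine circleIntegral.integral_congr hr0.le fun u hu => ?_; simp
      rw [h, mono_int hr0, if_neg (by omega)]
  | succ t ih =>
      intro n hn
      have hs := split hr0 hr1 n ((t:ℤ) + 1)
      have he : ((t:ℤ) + 1) - 1 = ((t:ℕ):ℤ) := by push_cast; ring
      have he2 : ((t:ℤ) + 1) = (((t+1:ℕ)):ℤ) := by push_cast; ring
      rw [he, he2] at hs
      have h1 := ih n (by omega)
      have h2 := ih (n+1) (by omega)
      rw [h1, h2] at hs
      linear_combination -hs

lemma Tval (hr0 : 0 < r) (hr1 : r < 1) (k α : ℕ) (m : ℕ) :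
    (∮ u in C(0, r), u ^ ((m:ℤ) - ((k:ℤ) + 1 + (α:ℤ))) * (1 - u) ^ ((α:ℤ) - 1 - (m:ℤ))) =
      if α ≤ m ∧ m ≤ k + α then 2 * π * I * (k.choose (m - α)) else 0 := by
  rcases lt_or_ge m α with hm | hm
  · -- m < α : polynomial case, zero
    rw [if_neg (by omega)]
    have he : ((α:ℤ) - 1 - (m:ℤ)) = (((α - 1 - m : ℕ)):ℤ) := by omega
    rw [he]
    exact L4 hr0 hr1 _ _ (by omega)
  · rcases le_or_gt m (k + α) with hm2 | hm2
    · -- α ≤ m ≤ k + α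
      rw [if_pos ⟨hm, hm2⟩]
      have ha : ((m:ℤ) - ((k:ℤ) + 1 + (α:ℤ))) = -(((k + α - m : ℕ)):ℤ) - 1 := by omega
      have hb : ((α:ℤ) - 1 - (m:ℤ)) = -(((m + 1 - α : ℕ)):ℤ) := by omega
      rw [ha, hb, L2 hr0 hr1]
      congr 2
      have : (k + α - m) + (m + 1 - α) - 1 = k := by omega
      rw [this]
      have : k + α - m = k - (m - α) := by omega
      rw [this, Nat.choose_symm (by omega)]
    · -- m > k + α : nonneg power of u
      rw [if_neg (by omega)]
      have ha : ((m:ℤ) - ((k:ℤ) + 1 + (α:ℤ))) = (((m - (k + 1 + α) : ℕ)):ℤ) := by omega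
      rw [ha]
      exact int_zero hr0 hr1 _ _

lemma circle_hasSum {F : ℕ → ℂ → ℂ} {g : ℂ → ℂ} {c : ℂ} (hr0 : 0 < r)
    (hF : ∀ m, ContinuousOn (F m) (sphere c r))
    (M : ℕ → ℝ) (hM : Summable M)
    (hb : ∀ m, ∀ u ∈ sphere c r, ‖F m u‖ ≤ M m)
    (hsum : ∀ u ∈ sphere c r, HasSum (fun m => F m u) (g u)) :
    HasSum (fun m => ∮ u in C(c, r), F m u) (∮ u in C(c, r), g u) := by
  simp only [circleIntegral]
  refine intervalIntegral.hasSum_integral_of_dominated_convergence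
    (fun m _ => r * M m) (fun m => ?_) (fun m => ?_) ?_ ?_ ?_
  · apply Continuous.aestronglyMeasurable
    simp only [deriv_circleMap]
    exact (continuous_circleMap 0 r |>.mul continuous_const).smul
      ((hF m).comp_continuous (continuous_circleMap c r)
        (fun θ => circleMap_mem_sphere c hr0.le θ))
  · refine Eventually.of_forall fun θ _ => ?_
    rw [deriv_circleMap, norm_smul]
    have h1 : ‖circleMap 0 r θ * I‖ = r := by
      rw [norm_mul]
      simp [_root_.abs_of_nonneg hr0.le]
    rw [h1]
    exact mul_le_mul_of_nonneg_left (hb m _ (circleMap_mem_sphere c hr0.le θ)) hr0.le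
  · exact Eventually.of_forall fun θ _ => (hM.mul_left r)
  · exact intervalIntegrable_const
  · refine Eventually.of_forall fun θ _ => ?_
    exact (hsum _ (circleMap_mem_sphere c hr0.le θ)).const_smul _
end helpers




-- pointwise expansion
lemma pt_hasSum {r : ℝ} (hr0 : 0 < r) (hr1 : r < 1) (k α : ℕ) (z : ℂ)
    {u : ℂ} (hu : u ∈ sphere (0:ℂ) r) :
    HasSum (fun m : ℕ => ((-z) ^ m / (Nat.factorial m)) *
        (u ^ ((m:ℤ) - ((k:ℤ) + 1 + (α:ℤ))) * (1 - u) ^ ((α:ℤ) - 1 - (m:ℤ))))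
      ((1 - u) ^ ((α : ℤ) - 1) * u ^ (-((k : ℤ) + 1 + (α : ℤ))) *
            Complex.exp (-z * u / (1 - u))) := by
  have h0 := sph_ne hr0 hu
  have h1 := sph_one_sub_ne hr1 hu
  have hexp : HasSum (fun m : ℕ => (-z * u / (1 - u)) ^ m / (Nat.factorial m))
      (Complex.exp (-z * u / (1 - u))) := by
    rw [Complex.exp_eq_exp_ℂ]
    exact NormedSpace.expSeries_div_hasSum_exp _
  have h := hexp.mul_left ((1 - u) ^ ((α : ℤ) - 1) * u ^ (-((k : ℤ) + 1 + (α : ℤ))))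
  have hfe : (fun m : ℕ => ((-z) ^ m / (Nat.factorial m)) *
        (u ^ ((m:ℤ) - ((k:ℤ) + 1 + (α:ℤ))) * (1 - u) ^ ((α:ℤ) - 1 - (m:ℤ))))
      = fun m : ℕ => ((1 - u) ^ ((α : ℤ) - 1) * u ^ (-((k : ℤ) + 1 + (α : ℤ)))) *
        ((-z * u / (1 - u)) ^ m / (Nat.factorial m)) := by
    funext m
    have e1 : u ^ ((m:ℤ) - ((k:ℤ) + 1 + (α:ℤ)))
        = u ^ (m:ℕ) * u ^ (-((k:ℤ) + 1 + (α:ℤ))) := by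
      rw [sub_eq_add_neg, zpow_add₀ h0, zpow_natCast]
    have e2 : (1-u) ^ ((α:ℤ) - 1 - (m:ℤ))
        = (1-u) ^ ((α:ℤ) - 1) * ((1-u) ^ (m:ℕ))⁻¹ := by
      rw [sub_eq_add_neg ((α:ℤ)-1), zpow_add₀ h1, zpow_neg, zpow_natCast]
    have e3 : (-z*u/(1-u))^m = (-z)^m * u^m * ((1-u)^m)⁻¹ := by
      rw [div_pow, mul_pow, div_eq_mul_inv]
    rw [e1, e2, e3]
    ring
  rw [hfe]
  exact h

lemma Fbound {r : ℝ} (hr0 : 0 < r) (hr1 : r < 1) (k α : ℕ) (z : ℂ) (m : ℕ)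
    {u : ℂ} (hu : u ∈ sphere (0:ℂ) r) :
    ‖((-z) ^ m / (Nat.factorial m : ℂ)) *
        (u ^ ((m:ℤ) - ((k:ℤ) + 1 + (α:ℤ))) * (1 - u) ^ ((α:ℤ) - 1 - (m:ℤ)))‖ ≤
      (r ^ (-((k:ℤ) + 1 + (α:ℤ))) * 2 ^ α / (1 - r)) *
        ((‖z‖ * r / (1 - r)) ^ m / (Nat.factorial m)) := by
  have hr' : (0:ℝ) < 1 - r := by linarith
  have hnu : ‖u‖ = r := sph_norm hu
  have h1n : 1 - r ≤ ‖1 - u‖ := sph_one_sub_norm hr1 hu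
  have h1pos : (0:ℝ) < ‖1 - u‖ := lt_of_lt_of_le hr' h1n
  have h1le2 : ‖1 - u‖ ≤ 2 := by
    have := norm_sub_le (1:ℂ) u
    rw [hnu] at this
    rw [show ‖(1:ℂ)‖ = 1 by simp] at this
    linarith
  have e1eq : (r:ℝ) ^ ((m:ℤ) - ((k:ℤ) + 1 + (α:ℤ)))
      = r ^ m * r ^ (-((k:ℤ) + 1 + (α:ℤ))) := by
    rw [sub_eq_add_neg, zpow_add₀ (ne_of_gt hr0), zpow_natCast]
  have e2eq : ‖1 - u‖ ^ ((α:ℤ) - 1 - (m:ℤ)) = ‖1 - u‖ ^ α / ‖1 - u‖ ^ (m+1) := by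
    rw [show (α:ℤ) - 1 - (m:ℤ) = (α:ℤ) - ((m+1:ℕ):ℤ) by push_cast; ring,
      zpow_sub₀ (ne_of_gt h1pos), zpow_natCast, zpow_natCast]
  have hb2 : ‖1 - u‖ ^ α / ‖1 - u‖ ^ (m+1) ≤ 2 ^ α / (1 - r) ^ (m+1) := by
    apply div_le_div₀ (by positivity) (pow_le_pow_left₀ (norm_nonneg _) h1le2 α)
      (by positivity) (pow_le_pow_left₀ hr'.le h1n (m+1))
  have lhs_eq : ‖((-z) ^ m / (Nat.factorial m : ℂ)) *
        (u ^ ((m:ℤ) - ((k:ℤ) + 1 + (α:ℤ))) * (1 - u) ^ ((α:ℤ) - 1 - (m:ℤ)))‖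
      = (‖z‖ ^ m / (Nat.factorial m)) * ((r ^ m * r ^ (-((k:ℤ) + 1 + (α:ℤ)))) *
          (‖1 - u‖ ^ α / ‖1 - u‖ ^ (m+1))) := by
    rw [norm_mul, norm_mul, norm_div, norm_pow, norm_neg, norm_zpow, norm_zpow, hnu,
      e1eq, ← e2eq]
    simp [Complex.norm_natCast]
  have rhs_eq : (r ^ (-((k:ℤ) + 1 + (α:ℤ))) * 2 ^ α / (1 - r)) *
        ((‖z‖ * r / (1 - r)) ^ m / (Nat.factorial m))
      = (‖z‖ ^ m / (Nat.factorial m)) * ((r ^ m * r ^ (-((k:ℤ) + 1 + (α:ℤ)))) *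
          (2 ^ α / (1 - r) ^ (m+1))) := by
    have hfac : (0:ℝ) < (Nat.factorial m : ℝ) := by positivity
    have : (1:ℝ) - r ≠ 0 := hr'.ne'
    field_simp
    have h' : (1 - r)⁻¹ ^ m * (1 - r) ^ m = 1 := by rw [← mul_pow, inv_mul_cancel₀ this, one_pow]
    linear_combination (r ^ m * ‖z‖ ^ m - r * r ^ m * ‖z‖ ^ m) * h'
  rw [lhs_eq, rhs_eq]
  apply mul_le_mul_of_nonneg_left _ (by positivity)
  apply mul_le_mul_of_nonneg_left hb2 (by positivity)

lemma nat_id (k α j : ℕ) (hj : j ≤ k) :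
    k.factorial * ((k+α).choose (k-j)) * (α+j).factorial
      = k.choose j * j.factorial * (k+α).factorial := by
  have A := Nat.choose_mul_factorial_mul_factorial (show k - j ≤ k + α by omega)
  rw [show k + α - (k - j) = α + j by omega] at A
  have B := Nat.choose_mul_factorial_mul_factorial hj
  apply Nat.eq_of_mul_eq_mul_right (Nat.factorial_pos (k-j))
  calc k.factorial * ((k+α).choose (k-j)) * (α+j).factorial * (k-j).factorial
      = ((k+α).choose (k-j) * (k-j).factorial * (α+j).factorial) * k.factorial := by ring
    _ = (k+α).factorial * k.factorial := by rw [A]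
    _ = (k.choose j * j.factorial * (k-j).factorial) * (k+α).factorial := by rw [B]; ring
    _ = k.choose j * j.factorial * (k+α).factorial * (k-j).factorial := by ring

theorem laguerre_contour_representation_second (k α : ℕ) (z : ℂ) (hz : z ≠ 0) (r : ℝ)
    (hr0 : 0 < r) (hr1 : r < 1) :
    (Nat.factorial k : ℂ) * Lag k α z / (Nat.factorial (k + α)) =
      (1 / (2 * (π : ℂ) * Complex.I * (-z) ^ α)) *
        ∮ u in C(0, r),
          (1 - u) ^ ((α : ℤ) - 1) * u ^ (-((k : ℤ) + 1 + (α : ℤ))) *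
            Complex.exp (-z * u / (1 - u)) := by
  set F : ℕ → ℂ → ℂ := fun m u => ((-z) ^ m / (Nat.factorial m : ℂ)) *
    (u ^ ((m:ℤ) - ((k:ℤ) + 1 + (α:ℤ))) * (1 - u) ^ ((α:ℤ) - 1 - (m:ℤ))) with hFdef
  have hF : ∀ m, ContinuousOn (F m) (sphere (0:ℂ) r) :=
    fun m => continuousOn_const.mul (contOn hr0 hr1 _ _)
  have hM : Summable (fun m : ℕ => (r ^ (-((k:ℤ) + 1 + (α:ℤ))) * 2 ^ α / (1 - r)) *
      ((‖z‖ * r / (1 - r)) ^ m / (Nat.factorial m))) :=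
    (Real.summable_pow_div_factorial _).mul_left _
  have h1 := circle_hasSum (c := (0:ℂ)) hr0 hF _ hM
    (fun m u hu => Fbound hr0 hr1 k α z m hu)
    (fun u hu => pt_hasSum hr0 hr1 k α z hu)
  set c : ℕ → ℂ := fun m => ((-z) ^ m / (Nat.factorial m : ℂ)) *
    (if α ≤ m ∧ m ≤ k + α then 2 * π * I * (k.choose (m - α)) else 0) with hcdef
  have heq : (fun m => ∮ u in C(0, r), F m u) = c := by
    funext m
    rw [hFdef]
    rw [circleIntegral.integral_const_mul, Tval hr0 hr1 k α m]
  rw [heq] at h1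
  set s : Finset ℕ := (Finset.range (k+1)).map
    ⟨fun j => α + j, add_right_injective α⟩ with hsdef
  have h2 : HasSum c (∑ m ∈ s, c m) := by
    apply hasSum_sum_of_ne_finset_zero
    intro m hm
    have : ¬ (α ≤ m ∧ m ≤ k + α) := by
      intro hcon
      apply hm
      rw [hsdef, Finset.mem_map]
      exact ⟨m - α, Finset.mem_range.2 (by omega), by simp; omega⟩
    rw [hcdef]
    simp only [if_neg this, mul_zero]
  have hg := h1.unique h2
  rw [hsdef, Finset.sum_map] at hg
  simp only [Function.Embedding.coeFn_mk] at hg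
  have hcj : ∀ j ∈ Finset.range (k+1),
      c (α + j) = 2 * π * I * (-z) ^ α * ((-z) ^ j * (k.choose j) / ((α+j).factorial)) := by
    intro j hj
    rw [hcdef]
    simp only [Function.Embedding.coeFn_mk]
    rw [if_pos ⟨by omega, by simp at hj; omega⟩]
    rw [show α + j - α = j by omega, pow_add]
    ring
  rw [Finset.sum_congr rfl hcj, ← Finset.mul_sum] at hg
  rw [hg]
  have hπ : (2 * (π:ℂ) * I) ≠ 0 := by
    simp [Real.pi_ne_zero, Complex.I_ne_zero]
  have hzα : (-z) ^ α ≠ 0 := pow_ne_zero _ (neg_ne_zero.2 hz)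
  rw [show (1 / (2 * (π:ℂ) * I * (-z) ^ α)) *
      (2 * π * I * (-z) ^ α * ∑ j ∈ Finset.range (k+1),
        ((-z) ^ j * (k.choose j) / ((α+j).factorial)))
      = ∑ j ∈ Finset.range (k+1), ((-z) ^ j * (k.choose j) / ((α+j).factorial)) by
    field_simp]
  rw [Lag, Finset.mul_sum, Finset.sum_div]
  apply Finset.sum_congr rfl
  intro j hj
  have hjk : j ≤ k := by simp at hj; omega
  have cnat : (k.factorial : ℂ) * ((k+α).choose (k-j)) * ((α+j).factorial)
      = (k.choose j) * (j.factorial) * ((k+α).factorial) := by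
    exact_mod_cast congrArg (Nat.cast : ℕ → ℂ) (nat_id k α j hjk)
  have hfj : (j.factorial : ℂ) ≠ 0 := by exact_mod_cast j.factorial_ne_zero
  have hfkα : ((k+α).factorial : ℂ) ≠ 0 := by exact_mod_cast (k+α).factorial_ne_zero
  have hfαj : ((α+j).factorial : ℂ) ≠ 0 := by exact_mod_cast (α+j).factorial_ne_zero
  rw [neg_pow z j]
  field_simp
  linear_combination cnat
end

section
/- For every real ρ > 0 and all complex numbers A, B, the absolutely convergent double integral satisfies ∫_ℝ ∫_ℝ exp(−(t² + s²)/2 + A s + B t)/(ρ + i(s − t)) ds dt = 2π e^{(A² + B²)/2} ∫_0^∞ exp(−u² − u(ρ + i(A − B))) du. -/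
open MeasureTheory Complex Real Filter

noncomputable def Kaux (ρ : ℝ) (A B : ℂ) (p : ℝ × ℝ) (u : ℝ) : ℂ :=
  Complex.exp (-(((p.1 : ℂ)) ^ 2 + ((p.2 : ℂ)) ^ 2) / 2 + A * (p.2 : ℂ) + B * (p.1 : ℂ)) *
    Complex.exp (-((((ρ : ℂ) + Complex.I * ((p.2 : ℂ) - (p.1 : ℂ)))) * (u : ℂ)))

lemma integrableOn_cexp_neg {c : ℂ} (hc : 0 < c.re) :
    IntegrableOn (fun u : ℝ => Complex.exp (-(c * u))) (Set.Ioi 0) := by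
  apply Integrable.mono' (g := fun u : ℝ => Real.exp (-c.re * u)) (exp_neg_integrableOn_Ioi 0 hc)
  · exact Continuous.aestronglyMeasurable (by fun_prop)
  · filter_upwards with u
    simp [Complex.norm_exp, Complex.mul_re]

lemma integral_cexp_neg {c : ℂ} (hc : 0 < c.re) :
    ∫ u in Set.Ioi (0:ℝ), Complex.exp (-(c * u)) = 1 / c := by
  have hc0 : c ≠ 0 := fun h => by simp [h] at hc
  have hd : ∀ x ∈ Set.Ioi (0:ℝ), HasDerivAt (fun u : ℝ => -Complex.exp (-(c * u)) / c)
      (Complex.exp (-(c * x))) x := by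
    intro x _
    have h1 : HasDerivAt (fun z : ℂ => -Complex.exp (-(c * z)) / c)
        (Complex.exp (-(c * x))) (x : ℂ) := by
      have h0 : HasDerivAt (fun z : ℂ => -(c * z)) (-c) (x : ℂ) := by
        have h00 := ((hasDerivAt_id ((x : ℝ) : ℂ)).const_mul c).neg
        simp only [mul_one] at h00
        exact h00
      have h2 := (h0.cexp.neg.div_const c)
      convert h2 using 1 <;> first | rfl | field_simp
    exact h1.comp_ofReal
  have htend : Tendsto (fun x : ℝ => -Complex.exp (-(c * x)) / c) atTop (nhds 0) := by
    rw [tendsto_zero_iff_norm_tendsto_zero]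
    have : Tendsto (fun x : ℝ => Real.exp (-(c.re * x)) / ‖c‖) atTop (nhds 0) := by
      have h3 : Tendsto (fun x : ℝ => c.re * x) atTop atTop :=
        Tendsto.const_mul_atTop hc tendsto_id
      simpa using ((Real.tendsto_exp_neg_atTop_nhds_zero.comp h3).div_const ‖c‖)
    convert this using 2 with x
    simp [Complex.norm_exp, Complex.mul_re]
  have hcont : ContinuousWithinAt (fun u : ℝ => -Complex.exp (-(c * u)) / c)
      (Set.Ici 0) 0 := (Continuous.continuousWithinAt (by fun_prop))
  have := integral_Ioi_of_hasDerivAt_of_tendsto hcont hd (integrableOn_cexp_neg hc) htend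
  rw [this]
  simp [neg_div]

lemma real_gauss_integrable (b : ℝ) :
    Integrable (fun x : ℝ => Real.exp (-x ^ 2 / 2 + b * x)) := by
  have hb : ((-(1/2) : ℂ)).re < 0 := by norm_num
  have h := (integrable_cexp_quadratic' hb (b : ℂ) 0).norm
  have key : ∀ x : ℝ, ‖Complex.exp ((-(1/2) : ℂ) * x ^ 2 + (b : ℂ) * x + 0)‖
      = Real.exp (-x ^ 2 / 2 + b * x) := by
    intro x
    rw [show ((-(1/2) : ℂ) * x ^ 2 + (b : ℂ) * x + 0) = ((-x ^ 2 / 2 + b * x : ℝ) : ℂ) by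
      push_cast; ring]
    rw [Complex.norm_exp, Complex.ofReal_re]
  have heq : (fun x : ℝ => ‖Complex.exp ((-(1/2) : ℂ) * x ^ 2 + (b : ℂ) * x + 0)‖)
      = fun x : ℝ => Real.exp (-x ^ 2 / 2 + b * x) := funext key
  exact heq ▸ h

theorem gaussian_double_integral_identity (ρ : ℝ) (hρ : 0 < ρ) (A B : ℂ) :
    MeasureTheory.Integrable
      (fun p : ℝ × ℝ =>
        Complex.exp (-(((p.1 : ℂ)) ^ 2 + ((p.2 : ℂ)) ^ 2) / 2 + A * (p.2 : ℂ) + B * (p.1 : ℂ)) /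
          ((ρ : ℂ) + Complex.I * ((p.2 : ℂ) - (p.1 : ℂ)))) ∧
    (∫ t : ℝ, ∫ s : ℝ,
        Complex.exp (-(((t : ℂ)) ^ 2 + ((s : ℂ)) ^ 2) / 2 + A * (s : ℂ) + B * (t : ℂ)) /
          ((ρ : ℂ) + Complex.I * ((s : ℂ) - (t : ℂ)))) =
      2 * (π : ℂ) * Complex.exp ((A ^ 2 + B ^ 2) / 2) *
        ∫ u in Set.Ioi (0 : ℝ),
          Complex.exp (-((u : ℂ)) ^ 2 - (u : ℂ) * ((ρ : ℂ) + Complex.I * (A - B))) := by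
  have hb : ((-(1/2) : ℂ)).re < 0 := by norm_num
  -- the denominator
  have hcre : ∀ p : ℝ × ℝ, ((ρ : ℂ) + Complex.I * ((p.2 : ℂ) - (p.1 : ℂ))).re = ρ := by
    intro p; simp
  have hcpos : ∀ p : ℝ × ℝ, 0 < ((ρ : ℂ) + Complex.I * ((p.2 : ℂ) - (p.1 : ℂ))).re := by
    intro p; rw [hcre]; exact hρ
  have hcne : ∀ p : ℝ × ℝ, ((ρ : ℂ) + Complex.I * ((p.2 : ℂ) - (p.1 : ℂ))) ≠ 0 := by
    intro p h
    have := congrArg Complex.re h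
    rw [hcre] at this
    simp at this
    exact absurd this (ne_of_gt hρ)
  -- real part of the numerator's exponent
  have hEre : ∀ p : ℝ × ℝ,
      ((-(((p.1 : ℂ)) ^ 2 + ((p.2 : ℂ)) ^ 2) / 2 + A * (p.2 : ℂ) + B * (p.1 : ℂ))).re
        = (-p.1 ^ 2 / 2 + B.re * p.1) + (-p.2 ^ 2 / 2 + A.re * p.2) := by
    intro p
    rw [show (-(((p.1 : ℂ)) ^ 2 + ((p.2 : ℂ)) ^ 2) / 2 + A * (p.2 : ℂ) + B * (p.1 : ℂ))
        = ((-(p.1 ^ 2 + p.2 ^ 2) / 2 : ℝ) : ℂ) + A * (p.2 : ℂ) + B * (p.1 : ℂ) by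
      push_cast; ring]
    simp only [Complex.add_re, Complex.ofReal_re, Complex.mul_re, Complex.ofReal_im,
      mul_zero, sub_zero]
    ring
  -- integrability of F
  have hF : Integrable
      (fun p : ℝ × ℝ =>
        Complex.exp (-(((p.1 : ℂ)) ^ 2 + ((p.2 : ℂ)) ^ 2) / 2 + A * (p.2 : ℂ) + B * (p.1 : ℂ)) /
          ((ρ : ℂ) + Complex.I * ((p.2 : ℂ) - (p.1 : ℂ)))) (volume.prod volume) := by
    apply Integrable.mono'
      (g := fun p : ℝ × ℝ => (Real.exp (-p.1 ^ 2 / 2 + B.re * p.1) *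
          Real.exp (-p.2 ^ 2 / 2 + A.re * p.2)) / ρ)
      (((real_gauss_integrable B.re).mul_prod (real_gauss_integrable A.re)).div_const ρ)
    · apply Continuous.aestronglyMeasurable
      apply Continuous.div (by fun_prop) (by fun_prop) hcne
    · filter_upwards with p
      rw [norm_div, Complex.norm_exp, hEre p, Real.exp_add]
      apply div_le_div_of_nonneg_left (by positivity) (by positivity)
      calc ρ = |((ρ : ℂ) + Complex.I * ((p.2 : ℂ) - (p.1 : ℂ))).re| := by
            rw [hcre]; exact (abs_of_pos hρ).symm
        _ ≤ ‖(ρ : ℂ) + Complex.I * ((p.2 : ℂ) - (p.1 : ℂ))‖ := Complex.abs_re_le_norm _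
  -- integrability of K on the triple product
  have hK : Integrable (Function.uncurry (fun p u => Kaux ρ A B p u))
      ((volume.prod volume).prod (volume.restrict (Set.Ioi 0))) := by
    apply Integrable.mono'
      (g := fun q : (ℝ × ℝ) × ℝ => (Real.exp (-q.1.1 ^ 2 / 2 + B.re * q.1.1) *
          Real.exp (-q.1.2 ^ 2 / 2 + A.re * q.1.2)) * Real.exp (-ρ * q.2))
      (((real_gauss_integrable B.re).mul_prod (real_gauss_integrable A.re)).mul_prod
        (exp_neg_integrableOn_Ioi 0 hρ))
    · apply Continuous.aestronglyMeasurable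
      unfold Function.uncurry Kaux
      fun_prop
    · filter_upwards with q
      obtain ⟨p, u⟩ := q
      simp only [Function.uncurry, Kaux, norm_mul, Complex.norm_exp]
      rw [hEre p, Real.exp_add]
      apply le_of_eq
      congr 1
      congr 1
      have : ((((ρ : ℂ) + Complex.I * ((p.2 : ℂ) - (p.1 : ℂ)))) * (u : ℂ)).re = ρ * u := by
        rw [Complex.mul_re]
        simp [hcre p]
      rw [Complex.neg_re, this, neg_mul]
  -- pointwise identity: F p = ∫ u in Ioi 0, K p u
  have hpt : ∀ p : ℝ × ℝ,
      Complex.exp (-(((p.1 : ℂ)) ^ 2 + ((p.2 : ℂ)) ^ 2) / 2 + A * (p.2 : ℂ) + B * (p.1 : ℂ)) /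
          ((ρ : ℂ) + Complex.I * ((p.2 : ℂ) - (p.1 : ℂ)))
        = ∫ u in Set.Ioi (0:ℝ), Kaux ρ A B p u := by
    intro p
    rw [div_eq_mul_one_div, ← integral_cexp_neg (hcpos p), ← MeasureTheory.integral_const_mul]
    rfl
  constructor
  · rw [Measure.volume_eq_prod]; exact hF
  calc (∫ t : ℝ, ∫ s : ℝ,
        Complex.exp (-(((t : ℂ)) ^ 2 + ((s : ℂ)) ^ 2) / 2 + A * (s : ℂ) + B * (t : ℂ)) /
          ((ρ : ℂ) + Complex.I * ((s : ℂ) - (t : ℂ))))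
      = ∫ p : ℝ × ℝ,
        Complex.exp (-(((p.1 : ℂ)) ^ 2 + ((p.2 : ℂ)) ^ 2) / 2 + A * (p.2 : ℂ) + B * (p.1 : ℂ)) /
          ((ρ : ℂ) + Complex.I * ((p.2 : ℂ) - (p.1 : ℂ))) ∂(volume.prod volume) :=
        MeasureTheory.integral_integral hF
    _ = ∫ p : ℝ × ℝ, (∫ u in Set.Ioi (0:ℝ), Kaux ρ A B p u) ∂(volume.prod volume) := by
        exact integral_congr_ae (Filter.Eventually.of_forall fun p => hpt p)
    _ = ∫ u in Set.Ioi (0:ℝ), (∫ p : ℝ × ℝ, Kaux ρ A B p u ∂(volume.prod volume)) :=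
        MeasureTheory.integral_integral_swap hK
    _ = ∫ u in Set.Ioi (0:ℝ), (2 * (π : ℂ) * Complex.exp ((A ^ 2 + B ^ 2) / 2)) *
          Complex.exp (-((u : ℂ)) ^ 2 - (u : ℂ) * ((ρ : ℂ) + Complex.I * (A - B))) := by
        refine integral_congr_ae (Filter.Eventually.of_forall fun u => ?_)
        dsimp only
        have hsplit : (fun p : ℝ × ℝ => Kaux ρ A B p u) = fun p : ℝ × ℝ =>
            (fun t : ℝ => Complex.exp ((-(1/2) : ℂ) * (t:ℂ) ^ 2 + (B + Complex.I * u) * (t:ℂ) +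
              (-((ρ:ℂ) * u)))) p.1 *
            (fun s : ℝ => Complex.exp ((-(1/2) : ℂ) * (s:ℂ) ^ 2 + (A - Complex.I * u) * (s:ℂ) +
              0)) p.2 := by
          funext p
          simp only [Kaux, ← Complex.exp_add]
          congr 1
          ring
        rw [hsplit, MeasureTheory.integral_prod_mul
            (fun t : ℝ => Complex.exp ((-(1/2) : ℂ) * (t:ℂ) ^ 2 + (B + Complex.I * u) * (t:ℂ) +
              (-((ρ:ℂ) * u))))
            (fun s : ℝ => Complex.exp ((-(1/2) : ℂ) * (s:ℂ) ^ 2 + (A - Complex.I * u) * (s:ℂ) +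
              0)),
          integral_cexp_quadratic hb, integral_cexp_quadratic hb]
        have hexps : -((ρ:ℂ) * u) - (B + Complex.I * u) ^ 2 / (4 * -(1/2)) +
            (0 - (A - Complex.I * u) ^ 2 / (4 * -(1/2)))
            = (A ^ 2 + B ^ 2) / 2 + (-((u:ℂ)) ^ 2 - (u:ℂ) * ((ρ:ℂ) + Complex.I * (A - B))) := by
          linear_combination (u:ℂ) ^ 2 * Complex.I_sq
        rw [show ((π : ℂ) / -(-(1/2))) = 2 * π from by ring]
        rw [mul_mul_mul_comm, ← Complex.cpow_add _ _ (by
            simp [Real.pi_ne_zero] : (2 * (π:ℂ)) ≠ 0),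
          show (1/2 + 1/2 : ℂ) = 1 by norm_num, Complex.cpow_one,
          ← Complex.exp_add, hexps, Complex.exp_add]
        ring
    _ = 2 * (π : ℂ) * Complex.exp ((A ^ 2 + B ^ 2) / 2) *
        ∫ u in Set.Ioi (0 : ℝ),
          Complex.exp (-((u : ℂ)) ^ 2 - (u : ℂ) * ((ρ : ℂ) + Complex.I * (A - B))) :=
        MeasureTheory.integral_const_mul _ _
end
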